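/- Classical detailed balance from the quantum condition: let S be a strictly positive probability distribution on a finite set, r(z|z') a rate matrix, and define the classical generator L acting on diagonal matrices with (Lρ)(z) = Σ_{z'} r(z|z') P(z') for ρ = Σ_z P(z)|z⟩⟨z|. With density map E_σ(A) = Σ_z a(z)S(z)|z⟩⟨z| for diagonal A, the weighted-adjoint condition L* = Θ L_* Θ* for Θ induced by a permutation T of the finite set (Θ|z⟩⟨z| = |T⁻¹z⟩⟨T⁻¹z|) together with Θσ = σ is equivalent to: r(z'|z)S(z) = r(Tz|Tz')S(Tz') and S(z) = S(Tz) for all z, z'. -/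

import Mathlib

open Finset

/-- Classical detailed balance from the quantum condition: on diagonal
observables, the condition `L* = Θ L_* Θ*` (with `Θ` induced by a permutation
`T`) together with `Θσ = σ` is equivalent to
`r(z'|z)S(z) = r(Tz|Tz')S(Tz')` and `S(z) = S(Tz)`. -/
theorem classical_detailed_balance {Z : Type*} [Fintype Z]
    (S : Z → ℝ) (hS : ∀ z, 0 < S z) (hS1 : ∑ z, S z = 1)
    (r : Z → Z → ℝ) (T : Equiv.Perm Z) :
    ((∀ (a : Z → ℝ) (z : Z),
        (∑ z', a z' * r z' z) =
          ∑ z', (r (T z) z' * S z' / S (T z)) * a (T.symm z')) ∧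
      (∀ z, S (T z) = S z)) ↔
    ((∀ z z', r z' z * S z = r (T z) (T z') * S (T z')) ∧
      (∀ z, S z = S (T z))) := by
  classical
  constructor
  · rintro ⟨hL, hΘ⟩
    refine ⟨fun z z' => ?_, fun z => (hΘ z).symm⟩
    have h := hL (fun w => if w = z' then 1 else 0) z
    have hLHS : (∑ w, (if w = z' then (1:ℝ) else 0) * r w z) = r z' z := by
      rw [Finset.sum_eq_single z']
      · simp
      · intro b _ hb; simp [hb]
      · simp
    have hRHS : (∑ w, (r (T z) w * S w / S (T z)) *
        (if T.symm w = z' then (1:ℝ) else 0)) =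
        r (T z) (T z') * S (T z') / S (T z) := by
      rw [Finset.sum_eq_single (T z')]
      · simp
      · intro b _ hb
        have : T.symm b ≠ z' := fun h => hb (by rw [← h]; simp)
        simp [this]
      · simp
    rw [hLHS, hRHS] at h
    have hTz : S (T z) = S z := hΘ z
    field_simp [hTz, (hS z).ne'] at h ⊢
    rw [hTz] at h
    linarith [h]
  · rintro ⟨hdb, hΘ⟩
    refine ⟨fun a z => ?_, fun z => (hΘ z).symm⟩
    rw [← Equiv.sum_comp T (fun w => (r (T z) w * S w / S (T z)) * a (T.symm w))]
    apply Finset.sum_congr rfl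
    intro z' _
    simp only [Equiv.symm_apply_apply]
    rw [← hdb z z', ← hΘ z, mul_div_assoc, mul_comm]
    rw [div_self (hS z).ne', mul_one]
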